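/- For all n ≥ 1 and k ≥ 1, the descent generating function of the set {w ∈ 𝔖_{n+k+1} : s(w) ∈ 𝔖_{n+1,k}, w(1) ≤ n+k−1, and w(n+k+1) = n+k}, i.e. ∑ x^{des(w)} over this set, equals N_{n,k}(x) − N_{n−1,k}(x). -/

import Mathlib

open scoped Classical
open Polynomial

noncomputable section

/-- The number of descents of a permutation in one-line notation. -/
def descents {n : ℕ} (w : Equiv.Perm (Fin n)) : ℕ :=
  (Finset.univ.filter fun i : Fin n =>
    ∃ j : Fin n, (j : ℕ) = (i : ℕ) + 1 ∧ w j < w i).card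

/-- The Eulerian polynomial `E_n(x)`. -/
def Eul (n : ℕ) : Polynomial ℚ :=
  ∑ w : Equiv.Perm (Fin n), (X : Polynomial ℚ) ^ descents w

/-- One-line notation of a permutation of `Fin m`, as a list of values in `{1, …, m}`. -/
def oneLine {m : ℕ} (w : Equiv.Perm (Fin m)) : List ℕ :=
  List.ofFn fun i => (w i : ℕ) + 1

/-- Fueled version of the stack-sorting map: `s(L m R) = s(L) s(R) m` for `m` the maximum. -/
def stackSortFuel : ℕ → List ℕ → List ℕ
  | 0, _ => []
  | _ + 1, [] => []
  | f + 1, a :: l =>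
      let m := (a :: l).foldr max 0
      let i := (a :: l).idxOf m
      stackSortFuel f ((a :: l).take i) ++ stackSortFuel f ((a :: l).drop (i + 1)) ++ [m]

/-- The stack-sorting map `s` on lists of naturals. -/
def stackSort (w : List ℕ) : List ℕ := stackSortFuel w.length w

/-- `s(w) ∈ 𝔖_{m-k,k}`, i.e. the stack-sorting image of `w ∈ 𝔖_m` fixes all
(1-indexed) positions `> k`. -/
def SortsInto (m k : ℕ) (w : Equiv.Perm (Fin m)) : Prop :=
  ∀ i : ℕ, k ≤ i → i < m → (stackSort (oneLine w)).getD i 0 = i + 1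

/-- `N_{n,k}(x)`: descent generating function of `{w ∈ 𝔖_{n+k} : s(w) ∈ 𝔖_{n,k}}`. -/
def Nnk (n k : ℕ) : Polynomial ℚ :=
  ∑ w ∈ Finset.univ.filter (fun w : Equiv.Perm (Fin (n + k)) => SortsInto (n + k) k w),
    (X : Polynomial ℚ) ^ descents w

lemma stackSortFuel_succ (f : ℕ) (a : ℕ) (l : List ℕ) :
    stackSortFuel (f+1) (a::l) =
      stackSortFuel f ((a :: l).take ((a::l).idxOf ((a::l).foldr max 0))) ++
      stackSortFuel f ((a :: l).drop (((a::l).idxOf ((a::l).foldr max 0)) + 1)) ++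
      [(a::l).foldr max 0] := rfl

lemma foldr_max_le {l : List ℕ} {c : ℕ} (h : ∀ x ∈ l, x ≤ c) : l.foldr max 0 ≤ c := by
  induction l with
  | nil => simp
  | cons a t ih => simp only [List.foldr_cons]; exact max_le (h a (by simp)) (ih fun x hx => h x (by simp [hx]))

lemma le_foldr_max {l : List ℕ} {x : ℕ} (h : x ∈ l) : x ≤ l.foldr max 0 := by
  induction l with
  | nil => simp at h
  | cons a t ih =>
    rcases List.mem_cons.1 h with rfl | h
    · exact le_max_left _ _
    · exact le_trans (ih h) (le_max_right _ _)

lemma foldr_max_mem (a : ℕ) (t : List ℕ) : (a :: t).foldr max 0 ∈ a :: t := by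
  induction t generalizing a with
  | nil => simp
  | cons b s ih =>
    rcases max_choice a ((b :: s).foldr max 0) with h | h
    · simp only [List.foldr_cons] at h ⊢; rw [h]; simp
    · simp only [List.foldr_cons] at h ⊢; rw [h]
      have := ih b
      simp only [List.foldr_cons] at this
      simp [this]

lemma indexOf_middle {L R : List ℕ} {b : ℕ} (h : ∀ x ∈ L, x < b) :
    (L ++ b :: R).idxOf b = L.length := by
  induction L with
  | nil => simp
  | cons a t ih =>
    have ha : a ≠ b := by have := h a (by simp); omega
    rw [List.cons_append, List.idxOf_cons_ne _ ha, ih (fun x hx => h x (by simp [hx]))]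
    rfl

lemma foldr_max_middle {L R : List ℕ} {b : ℕ} (hL : ∀ x ∈ L, x < b) (hR : ∀ x ∈ R, x < b) :
    (L ++ b :: R).foldr max 0 = b := by
  apply le_antisymm
  · apply foldr_max_le
    intro x hx
    rcases List.mem_append.1 hx with h | h
    · exact le_of_lt (hL x h)
    · rcases List.mem_cons.1 h with rfl | h
      · exact le_refl _
      · exact le_of_lt (hR x h)
  · exact le_foldr_max (by simp)

lemma stackSortFuel_eq (f : ℕ) : ∀ l : List ℕ, l.length ≤ f → stackSortFuel f l = stackSort l := by
  induction f using Nat.strong_induction_on with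
  | _ f IH =>
  intro l hl
  match f, l with
  | 0, [] => rfl
  | Nat.succ g, [] => rfl
  | 0, a :: t => simp at hl
  | Nat.succ g, a :: t =>
    have hlen : t.length + 1 ≤ g + 1 := by simpa using hl
    have hmem := foldr_max_mem a t
    have hilt : (a :: t).idxOf ((a :: t).foldr max 0) < t.length + 1 := by
      have := List.idxOf_lt_length_iff.2 hmem
      simpa using this
    have htake : ((a :: t).take ((a :: t).idxOf ((a :: t).foldr max 0))).length ≤ t.length := by
      simp only [List.length_take, List.length_cons]; omega
    have hdrop : ((a :: t).drop ((a :: t).idxOf ((a :: t).foldr max 0) + 1)).length ≤ t.length := by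
      simp only [List.length_drop, List.length_cons]; omega
    show stackSortFuel (g+1) (a :: t) = stackSortFuel (t.length + 1) (a :: t)
    rw [stackSortFuel_succ, stackSortFuel_succ,
        IH g (by omega) _ (htake.trans (by omega)),
        IH g (by omega) _ (hdrop.trans (by omega)),
        IH t.length (by omega) _ htake,
        IH t.length (by omega) _ hdrop]

lemma stackSort_nil : stackSort [] = [] := rfl

lemma stackSort_middle {L R : List ℕ} {b : ℕ} (hL : ∀ x ∈ L, x < b) (hR : ∀ x ∈ R, x < b) :
    stackSort (L ++ b :: R) = stackSort L ++ stackSort R ++ [b] := by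
  have hfold := foldr_max_middle hL hR
  have hidx : (L ++ b :: R).idxOf ((L ++ b :: R).foldr max 0) = L.length := by
    rw [hfold]; exact indexOf_middle hL
  obtain ⟨a, t, ht⟩ : ∃ a t, L ++ b :: R = a :: t := by
    cases L with
    | nil => exact ⟨b, R, rfl⟩
    | cons a t => exact ⟨a, t ++ b :: R, rfl⟩
  have hlen : (L ++ b :: R).length = L.length + R.length + 1 := by simp; omega
  have htake : (L ++ b :: R).take L.length = L := List.take_left
  have hdroplem : (L ++ b :: R).drop (L.length + 1) = R := by
    have : L ++ b :: R = (L ++ [b]) ++ R := by simp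
    rw [this]
    have : L.length + 1 = (L ++ [b]).length := by simp
    rw [this, List.drop_left]
  show stackSortFuel (L ++ b :: R).length (L ++ b :: R) = _
  rw [hlen, ht, stackSortFuel_succ, ← ht, hfold, indexOf_middle hL, htake, hdroplem,
      stackSortFuel_eq _ _ (by omega), stackSortFuel_eq _ _ (by omega)]

lemma stackSort_length : ∀ l : List ℕ, (stackSort l).length = l.length := by
  suffices H : ∀ n (l : List ℕ), l.length = n → (stackSort l).length = l.length by
    intro l; exact H l.length l rfl
  intro n
  induction n using Nat.strong_induction_on with
  | _ n IH =>
  intro l hl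
  match l with
  | [] => rfl
  | a :: t =>
    have hmem := foldr_max_mem a t
    have hilt : (a :: t).idxOf ((a :: t).foldr max 0) < t.length + 1 := by
      have := List.idxOf_lt_length_iff.2 hmem
      simpa using this
    have hss : stackSort (a :: t) =
        stackSort ((a :: t).take ((a :: t).idxOf ((a :: t).foldr max 0))) ++
        stackSort ((a :: t).drop ((a :: t).idxOf ((a :: t).foldr max 0) + 1)) ++
        [(a :: t).foldr max 0] := by
      show stackSortFuel (a :: t).length (a :: t) = _
      rw [List.length_cons, stackSortFuel_succ,
          stackSortFuel_eq _ _ (by simp only [List.length_take, List.length_cons]; omega),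
          stackSortFuel_eq _ _ (by simp only [List.length_drop, List.length_cons]; omega)]
    have hlt : t.length + 1 = n := by simpa using hl
    have h1 : ((a :: t).take ((a :: t).idxOf ((a :: t).foldr max 0))).length <
        t.length + 1 := by
      simp only [List.length_take, List.length_cons]; omega
    have h2 : ((a :: t).drop ((a :: t).idxOf ((a :: t).foldr max 0) + 1)).length <
        t.length + 1 := by
      simp only [List.length_drop, List.length_cons]; omega
    have A : (stackSort ((a :: t).take ((a :: t).idxOf ((a :: t).foldr max 0)))).length
        = ((a :: t).take ((a :: t).idxOf ((a :: t).foldr max 0))).length :=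
      IH _ (show ((a :: t).take ((a :: t).idxOf ((a :: t).foldr max 0))).length < n by omega) _ rfl
    have B : (stackSort ((a :: t).drop ((a :: t).idxOf ((a :: t).foldr max 0) + 1))).length
        = ((a :: t).drop ((a :: t).idxOf ((a :: t).foldr max 0) + 1)).length :=
      IH _ (show ((a :: t).drop ((a :: t).idxOf ((a :: t).foldr max 0) + 1)).length < n by omega) _ rfl
    rw [hss]
    have C : ((a :: t).take ((a :: t).idxOf ((a :: t).foldr max 0))).length
        = (a :: t).idxOf ((a :: t).foldr max 0) := by
      simp only [List.length_take, List.length_cons]; omega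
    have D : ((a :: t).drop ((a :: t).idxOf ((a :: t).foldr max 0) + 1)).length
        = t.length - (a :: t).idxOf ((a :: t).foldr max 0) := by
      simp only [List.length_drop, List.length_cons]; omega
    rw [C] at A
    rw [D] at B
    simp only [List.length_append, A, B, List.length_singleton, List.length_cons, List.length_nil]
    omega

def desL (l : List ℕ) : ℕ :=
  ((Finset.range (l.length - 1)).filter fun i => l.getD (i+1) 0 < l.getD i 0).card

lemma getD_map (g : ℕ → ℕ) (l : List ℕ) {i : ℕ} (h : i < l.length) :
    (l.map g).getD i 0 = g (l.getD i 0) := by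
  rw [List.getD_eq_getElem _ _ (by simpa using h), List.getD_eq_getElem _ _ h, List.getElem_map]

lemma getD_mem (l : List ℕ) {i : ℕ} (h : i < l.length) : l.getD i 0 ∈ l := by
  rw [List.getD_eq_getElem _ _ h]; exact List.getElem_mem _

lemma desL_append_singleton {l : List ℕ} (hl : l ≠ []) (b : ℕ) :
    desL (l ++ [b]) = desL l + (if b < l.getD (l.length - 1) 0 then 1 else 0) := by
  have hlen : l.length ≠ 0 := by simpa using hl
  obtain ⟨n, hn⟩ : ∃ n, l.length = n + 1 := ⟨l.length - 1, by omega⟩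
  unfold desL
  have h1 : (l ++ [b]).length - 1 = n + 1 := by simp [hn]
  rw [h1, hn]
  simp only [Nat.add_sub_cancel]
  rw [Finset.range_add_one, Finset.filter_insert]
  have hcong : ∀ i ∈ Finset.range n,
      ((l ++ [b]).getD (i+1) 0 < (l ++ [b]).getD i 0) = (l.getD (i+1) 0 < l.getD i 0) := by
    intro i hi
    rw [Finset.mem_range] at hi
    rw [List.getD_append _ _ _ _ (by omega), List.getD_append _ _ _ _ (by omega)]
  have hfc : Finset.filter (fun i => (l ++ [b]).getD (i+1) 0 < (l ++ [b]).getD i 0) (Finset.range n)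
      = Finset.filter (fun i => l.getD (i+1) 0 < l.getD i 0) (Finset.range n) := by
    apply Finset.filter_congr
    intro i hi
    rw [hcong i hi]
  have hgetn : (l ++ [b]).getD n 0 = l.getD n 0 := List.getD_append _ _ _ _ (by omega)
  have hgetn1 : (l ++ [b]).getD (n+1) 0 = b := by
    rw [List.getD_append_right _ _ _ _ (by omega), hn]
    simp
  have hlast : l.getD (l.length - 1) 0 = l.getD n 0 := by rw [hn]; simp
  by_cases hb : b < l.getD n 0
  · rw [if_pos (by rw [hgetn, hgetn1]; exact hb)]
    rw [Finset.card_insert_of_notMem (by simp), hfc, if_pos hb]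
  · rw [if_neg (by rw [hgetn, hgetn1]; exact hb), hfc, if_neg hb, Nat.add_zero]

lemma desL_cons {l : List ℕ} (hl : l ≠ []) {b : ℕ} (hb : ∀ x ∈ l, x < b) :
    desL (b :: l) = desL l + 1 := by
  have hlen : l.length ≠ 0 := by simpa using hl
  obtain ⟨n, hn⟩ : ∃ n, l.length = n + 1 := ⟨l.length - 1, by omega⟩
  unfold desL
  have h1 : (b :: l).length - 1 = n + 1 := by simp [hn]
  rw [h1, hn]
  simp only [Nat.add_sub_cancel]
  have hset : Finset.filter (fun i => (b :: l).getD (i+1) 0 < (b :: l).getD i 0)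
        (Finset.range (n+1))
      = insert 0 ((Finset.filter (fun i => l.getD (i+1) 0 < l.getD i 0)
        (Finset.range n)).image (· + 1)) := by
    ext i
    simp only [Finset.mem_filter, Finset.mem_range, Finset.mem_insert, Finset.mem_image]
    constructor
    · rintro ⟨hi, hcond⟩
      cases i with
      | zero => exact Or.inl rfl
      | succ j =>
        right
        refine ⟨j, ⟨by omega, ?_⟩, rfl⟩
        have e1 : (b :: l).getD (j + 1 + 1) 0 = l.getD (j+1) 0 := by simp
        have e2 : (b :: l).getD (j + 1) 0 = l.getD j 0 := by simp
        rw [e1, e2] at hcond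
        exact hcond
    · rintro (rfl | ⟨j, ⟨hj, hcond⟩, rfl⟩)
      · refine ⟨by omega, ?_⟩
        have e1 : (b :: l).getD 1 0 = l.getD 0 0 := by simp
        have e0 : (b :: l).getD 0 0 = b := by simp
        rw [e1, e0]
        exact hb _ (getD_mem l (by omega))
      · refine ⟨by omega, ?_⟩
        have e1 : (b :: l).getD (j + 1 + 1) 0 = l.getD (j+1) 0 := by simp
        have e2 : (b :: l).getD (j + 1) 0 = l.getD j 0 := by simp
        rw [e1, e2]
        exact hcond
  rw [hset, Finset.card_insert_of_notMem (by simp),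
      Finset.card_image_of_injective _ (fun x y h => by simpa using h)]

lemma desL_map {l : List ℕ} {g : ℕ → ℕ}
    (hg : ∀ x ∈ l, ∀ y ∈ l, (g x < g y ↔ x < y)) :
    desL (l.map g) = desL l := by
  unfold desL
  rw [List.length_map]
  congr 1
  apply Finset.filter_congr
  intro i hi
  rw [Finset.mem_range] at hi
  have hi1 : i + 1 < l.length := by omega
  have hi0 : i < l.length := by omega
  rw [getD_map g l hi1, getD_map g l hi0]
  exact hg _ (getD_mem l hi1) _ (getD_mem l hi0)

lemma oneLine_length {r : ℕ} (w : Equiv.Perm (Fin r)) : (oneLine w).length = r := by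
  simp [oneLine]

lemma oneLine_getD {r : ℕ} (w : Equiv.Perm (Fin r)) {i : ℕ} (h : i < r) :
    (oneLine w).getD i 0 = (w ⟨i, h⟩ : ℕ) + 1 := by
  rw [oneLine, List.getD_eq_getElem _ _ (by simpa using h), List.getElem_ofFn]

lemma oneLine_mem_lt {r : ℕ} (w : Equiv.Perm (Fin r)) : ∀ x ∈ oneLine w, x < r + 1 := by
  intro x hx
  rw [oneLine, List.mem_ofFn] at hx
  obtain ⟨i, rfl⟩ := hx
  show (w i : ℕ) + 1 < r + 1
  have := (w i).isLt
  omega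

lemma descents_eq_desL {r : ℕ} (w : Equiv.Perm (Fin r)) : descents w = desL (oneLine w) := by
  unfold descents desL
  rw [oneLine_length]
  apply Finset.card_bij (fun (i : Fin r) _ => (i : ℕ))
  · intro i hi
    simp only [Finset.mem_filter, Finset.mem_univ, true_and] at hi
    obtain ⟨j, hj, hlt⟩ := hi
    have hjr : (i : ℕ) + 1 < r := by have := j.isLt; omega
    simp only [Finset.mem_filter, Finset.mem_range]
    refine ⟨by omega, ?_⟩
    rw [oneLine_getD w (by omega), oneLine_getD w (by omega)]
    have e1 : (⟨(i : ℕ) + 1, by omega⟩ : Fin r) = j := Fin.ext hj.symm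
    have e2 : (⟨(i : ℕ), by omega⟩ : Fin r) = i := Fin.ext rfl
    rw [e1, e2]
    have := Fin.lt_iff_val_lt_val.1 hlt
    omega
  · intro a _ b _ hab
    exact Fin.ext hab
  · intro i hi
    simp only [Finset.mem_filter, Finset.mem_range] at hi
    obtain ⟨hir, hcond⟩ := hi
    refine ⟨⟨i, by omega⟩, ?_, rfl⟩
    simp only [Finset.mem_filter, Finset.mem_univ, true_and]
    refine ⟨⟨i + 1, by omega⟩, rfl, ?_⟩
    rw [oneLine_getD w (by omega : i + 1 < r), oneLine_getD w (by omega : i < r)] at hcond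
    rw [Fin.lt_iff_val_lt_val]
    omega

lemma oneLine_decomp {r : ℕ} (v : Equiv.Perm (Fin (r+1))) :
    ∃ L R : List ℕ, oneLine v = L ++ (r+1) :: R ∧ (∀ x ∈ L, x < r+1) ∧ (∀ x ∈ R, x < r+1) ∧
      L.length = (v.symm (Fin.last r) : ℕ) := by
  set p := v.symm (Fin.last r) with hpdef
  have hp : (p : ℕ) < (oneLine v).length := by rw [oneLine_length]; exact p.isLt
  have hother : ∀ (j : ℕ) (hj : j < r + 1), j ≠ (p : ℕ) → (oneLine v).getD j 0 < r + 1 := by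
    intro j hj hne
    rw [oneLine_getD v hj]
    have hne2 : v ⟨j, hj⟩ ≠ Fin.last r := by
      intro h
      apply hne
      have : (⟨j, hj⟩ : Fin (r+1)) = p := by rw [hpdef, ← h, Equiv.symm_apply_apply]
      exact congrArg Fin.val this
    have := Fin.val_lt_last hne2
    omega
  have hv : (oneLine v)[(p : ℕ)] = r + 1 := by
    rw [← List.getD_eq_getElem _ 0 hp, oneLine_getD v p.isLt]
    have : v ⟨(p : ℕ), p.isLt⟩ = Fin.last r := by
      rw [Fin.eta, hpdef, Equiv.apply_symm_apply]
    rw [this, Fin.val_last]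
  refine ⟨(oneLine v).take (p : ℕ), (oneLine v).drop ((p : ℕ) + 1), ?_, ?_, ?_, ?_⟩
  · conv_lhs => rw [← List.take_append_drop (p : ℕ) (oneLine v)]
    rw [List.drop_eq_getElem_cons hp, hv]
  · intro x hx
    obtain ⟨j, hj, hxe⟩ := List.mem_iff_getElem.1 hx
    have hjlen : j < (oneLine v).length := by
      have := hj; rw [List.length_take] at this; omega
    have hjp : j < (p : ℕ) := by
      have := hj; rw [List.length_take] at this; omega
    have : x = (oneLine v).getD j 0 := by
      rw [List.getD_eq_getElem _ _ hjlen, ← hxe, List.getElem_take]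
    rw [this]
    exact hother j (by rw [oneLine_length] at hjlen; omega) (by omega)
  · intro x hx
    obtain ⟨j, hj, hxe⟩ := List.mem_iff_getElem.1 hx
    have hjlen : (p : ℕ) + 1 + j < (oneLine v).length := by
      have := hj; rw [List.length_drop] at this; omega
    have : x = (oneLine v).getD ((p : ℕ) + 1 + j) 0 := by
      rw [List.getD_eq_getElem _ _ hjlen, ← hxe, List.getElem_drop]
    rw [this]
    exact hother _ (by rw [oneLine_length] at hjlen; omega) (by omega)
  · rw [List.length_take]
    have := p.isLt
    rw [oneLine_length]
    omega

def extLast {r : ℕ} (v : Equiv.Perm (Fin r)) : Equiv.Perm (Fin (r+1)) :=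
  v.viaFintypeEmbedding Fin.castSuccEmb

lemma extLast_castSucc {r : ℕ} (v : Equiv.Perm (Fin r)) (i : Fin r) :
    extLast v i.castSucc = (v i).castSucc := by
  have := Equiv.Perm.viaFintypeEmbedding_apply_image v Fin.castSuccEmb i
  exact this

lemma extLast_last {r : ℕ} (v : Equiv.Perm (Fin r)) : extLast v (Fin.last r) = Fin.last r := by
  apply Equiv.Perm.viaFintypeEmbedding_apply_notMem_range
  rintro ⟨i, hi⟩
  have : i.castSucc = Fin.last r := hi
  exact absurd this (Fin.castSucc_lt_last i).ne

lemma oneLine_extLast {r : ℕ} (v : Equiv.Perm (Fin r)) :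
    oneLine (extLast v) = oneLine v ++ [r + 1] := by
  rw [oneLine, List.ofFn_succ', List.concat_eq_append]
  congr 1
  · rw [oneLine]
    congr 1
    funext i
    rw [extLast_castSucc]
    simp
  · rw [extLast_last]
    simp

lemma extLast_injective {r : ℕ} : Function.Injective (extLast (r := r)) := by
  intro a b h
  apply Equiv.ext
  intro i
  have h2 : extLast a i.castSucc = extLast b i.castSucc := by rw [h]
  rw [extLast_castSucc, extLast_castSucc] at h2
  exact Fin.castSucc_injective _ h2

lemma extLast_surj {r : ℕ} {e : Equiv.Perm (Fin (r+1))} (he : e (Fin.last r) = Fin.last r) :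
    ∃ v : Equiv.Perm (Fin r), extLast v = e := by
  have hne : ∀ i : Fin r, e i.castSucc ≠ Fin.last r := by
    intro i h
    have : i.castSucc = Fin.last r := e.injective (h.trans he.symm)
    exact absurd this (Fin.castSucc_lt_last i).ne
  have hlt : ∀ i : Fin r, (e i.castSucc : ℕ) < r := fun i => Fin.val_lt_last (hne i)
  let f : Fin r → Fin r := fun i => ⟨(e i.castSucc : ℕ), hlt i⟩
  have hinj : Function.Injective f := by
    intro a b hab
    have hval := congrArg Fin.val hab
    have hval2 : (e a.castSucc : ℕ) = (e b.castSucc : ℕ) := hval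
    have : e a.castSucc = e b.castSucc := Fin.ext hval2
    exact Fin.castSucc_injective _ (e.injective this)
  refine ⟨Equiv.ofBijective f (Finite.injective_iff_bijective.1 hinj), ?_⟩
  apply Equiv.ext
  intro i
  induction i using Fin.lastCases with
  | last => rw [extLast_last, he]
  | cast i =>
      rw [extLast_castSucc]
      apply Fin.ext
      simp [Equiv.ofBijective_apply, f, Fin.coe_castSucc]

lemma stackSort_cons_max {b : ℕ} {t : List ℕ} (ht : ∀ x ∈ t, x < b) :
    stackSort (b :: t) = stackSort t ++ [b] := by
  have h := stackSort_middle (L := []) (R := t) (b := b) (by simp) ht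
  simpa [stackSort_nil] using h

lemma stackSort_singleton (b : ℕ) : stackSort [b] = [b] := by
  have h := stackSort_cons_max (b := b) (t := []) (by simp)
  simpa [stackSort_nil] using h

lemma stackSort_append_max {b : ℕ} {t : List ℕ} (ht : ∀ x ∈ t, x < b) :
    stackSort (t ++ [b]) = stackSort t ++ [b] := by
  have h := stackSort_middle (L := t) (R := []) (b := b) ht (by simp)
  simpa [stackSort_nil] using h

lemma stackSort_oneLine_extLast {r : ℕ} (v : Equiv.Perm (Fin r)) :
    stackSort (oneLine (extLast v)) = stackSort (oneLine v) ++ [r+1] := by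
  rw [oneLine_extLast]
  exact stackSort_append_max (oneLine_mem_lt v)

lemma sortsInto_succ_iff {r k : ℕ} (hk : k ≤ r) {v : Equiv.Perm (Fin r)}
    {w : Equiv.Perm (Fin (r+1))}
    (h : stackSort (oneLine w) = stackSort (oneLine v) ++ [r+1]) :
    SortsInto (r+1) k w ↔ SortsInto r k v := by
  have hlenv : (stackSort (oneLine v)).length = r := by rw [stackSort_length, oneLine_length]
  constructor
  · intro hw i hki hir
    have := hw i hki (by omega)
    rwa [h, List.getD_append _ _ _ _ (by omega)] at this
  · intro hv i hki hir
    rw [h]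
    rcases Nat.lt_or_ge i r with hlt | hge
    · rw [List.getD_append _ _ _ _ (by omega)]
      exact hv i hki hlt
    · have hir' : i = r := by omega
      rw [List.getD_append_right _ _ _ _ (by omega)]
      have hz : i - (stackSort (oneLine v)).length = 0 := by omega
      rw [hz, hir']
      rfl

lemma descents_extLast {r : ℕ} (v : Equiv.Perm (Fin r)) (hr : 1 ≤ r) :
    descents (extLast v) = descents v := by
  rw [descents_eq_desL, descents_eq_desL, oneLine_extLast]
  have hne : oneLine v ≠ [] := by
    intro h
    have h2 := oneLine_length v
    rw [h] at h2
    simp at h2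
    omega
  rw [desL_append_singleton hne]
  have hlen1 : (oneLine v).length - 1 < r := by rw [oneLine_length]; omega
  rw [oneLine_getD v hlen1]
  have := (v ⟨(oneLine v).length - 1, hlen1⟩).isLt
  rw [if_neg (by omega), Nat.add_zero]

def swapTop (M : ℕ) : Equiv.Perm (Fin (M+2)) :=
  Equiv.swap ((Fin.last M).castSucc) (Fin.last (M+1))

def gmap (M : ℕ) (x : ℕ) : ℕ := if x = M + 1 then M + 2 else x

lemma gmap_order {M : ℕ} {x y : ℕ} (hx : x < M + 2) (hy : y < M + 2) :
    (gmap M x < gmap M y ↔ x < y) := by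
  unfold gmap
  split_ifs <;> omega

lemma theta_apply_castSucc {M : ℕ} (v : Equiv.Perm (Fin (M+1))) (i : Fin (M+1)) :
    (swapTop M * extLast v) i.castSucc =
      if v i = Fin.last M then Fin.last (M+1) else (v i).castSucc := by
  rw [Equiv.Perm.mul_apply, extLast_castSucc, swapTop]
  by_cases h : v i = Fin.last M
  · rw [if_pos h, h, Equiv.swap_apply_left]
  · rw [if_neg h]
    apply Equiv.swap_apply_of_ne_of_ne
    · exact fun hc => h (Fin.castSucc_injective _ hc)
    · exact (Fin.castSucc_lt_last (v i)).ne

lemma theta_apply_last {M : ℕ} (v : Equiv.Perm (Fin (M+1))) :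
    (swapTop M * extLast v) (Fin.last (M+1)) = (Fin.last M).castSucc := by
  rw [Equiv.Perm.mul_apply, extLast_last, swapTop, Equiv.swap_apply_right]

lemma oneLine_theta1 {M : ℕ} (v : Equiv.Perm (Fin (M+1))) :
    oneLine (swapTop M * extLast v) = (oneLine v).map (gmap M) ++ [M+1] := by
  have h1 : oneLine (swapTop M * extLast v) =
      (List.ofFn fun i : Fin (M+1) => ((swapTop M * extLast v) i.castSucc : ℕ) + 1) ++
        [((swapTop M * extLast v) (Fin.last (M+1)) : ℕ) + 1] := by
    rw [oneLine, List.ofFn_succ', List.concat_eq_append]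
  rw [h1, theta_apply_last]
  congr 1
  · rw [oneLine, List.map_ofFn]
    congr 1
    funext i
    rw [theta_apply_castSucc]
    by_cases h : v i = Fin.last M
    · rw [if_pos h]
      have hval : (v i : ℕ) = M := by rw [h]; rfl
      simp [Function.comp, gmap, hval, Fin.val_last]
    · rw [if_neg h]
      have hval : (v i : ℕ) < M := Fin.val_lt_last h
      simp only [Function.comp, gmap, Fin.coe_castSucc]
      rw [if_neg (by omega)]

lemma oneLine_map_gmap {M : ℕ} {L R : List ℕ}
    (hL : ∀ x ∈ L, x < M+1) (hR : ∀ x ∈ R, x < M+1) :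
    (L ++ (M+1) :: R).map (gmap M) = L ++ (M+2) :: R := by
  rw [List.map_append, List.map_cons]
  have hgL : L.map (gmap M) = L := by
    rw [List.map_congr_left (g := id)
        (fun a ha => by unfold gmap; rw [if_neg (by have := hL a ha; omega)]; rfl),
        List.map_id]
  have hgR : R.map (gmap M) = R := by
    rw [List.map_congr_left (g := id)
        (fun a ha => by unfold gmap; rw [if_neg (by have := hR a ha; omega)]; rfl),
        List.map_id]
  rw [hgL, hgR]
  have : gmap M (M+1) = M + 2 := by unfold gmap; rw [if_pos rfl]
  rw [this]

lemma stackSort_theta1 {M : ℕ} (v : Equiv.Perm (Fin (M+1))) :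
    stackSort (oneLine (swapTop M * extLast v)) = stackSort (oneLine v) ++ [M+2] := by
  obtain ⟨L, R, hdec, hL, hR, -⟩ := oneLine_decomp v
  rw [oneLine_theta1, hdec, oneLine_map_gmap hL hR]
  have e1 : (L ++ (M+2) :: R) ++ [M+1] = L ++ (M+2) :: (R ++ [M+1]) := by simp
  rw [e1,
      stackSort_middle (b := M+2) (fun x hx => by have := hL x hx; omega)
        (fun x hx => by
          rcases List.mem_append.1 hx with h | h
          · have := hR x h; omega
          · simp at h; omega),
      stackSort_append_max hR,
      stackSort_middle hL hR]
  simp [List.append_assoc]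

lemma desc_theta1 {M : ℕ} (v : Equiv.Perm (Fin (M+1)))
    (hvl : v (Fin.last M) ≠ Fin.last M) :
    descents (swapTop M * extLast v) = descents v := by
  rw [descents_eq_desL, descents_eq_desL, oneLine_theta1]
  have hlen : ((oneLine v).map (gmap M)).length = M + 1 := by
    rw [List.length_map, oneLine_length]
  have hne : (oneLine v).map (gmap M) ≠ [] := by
    intro h; rw [h] at hlen; simp at hlen
  rw [desL_append_singleton hne]
  have hM1 : M < M + 1 := by omega
  have hgetD : ((oneLine v).map (gmap M)).getD (((oneLine v).map (gmap M)).length - 1) 0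
      = gmap M ((oneLine v).getD M 0) := by
    rw [hlen]
    simp only [Nat.add_sub_cancel]
    exact getD_map _ _ (by rw [oneLine_length]; omega)
  rw [hgetD, oneLine_getD v hM1]
  have hlast : (⟨M, hM1⟩ : Fin (M+1)) = Fin.last M := Fin.ext rfl
  have hval : (v ⟨M, hM1⟩ : ℕ) < M := Fin.val_lt_last (by rw [hlast]; exact hvl)
  have hg : gmap M ((v ⟨M, hM1⟩ : ℕ) + 1) = (v ⟨M, hM1⟩ : ℕ) + 1 := by
    unfold gmap; rw [if_neg (by omega)]
  rw [hg, if_neg (by omega), Nat.add_zero]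
  exact desL_map (fun x hx y hy => gmap_order (oneLine_mem_lt v x hx) (oneLine_mem_lt v y hy))

lemma oneLine_rot {M : ℕ} (v : Equiv.Perm (Fin (M+1))) :
    oneLine (v * finRotate (M+1)) =
      (List.ofFn fun i : Fin M => ((v i.succ : ℕ) + 1)) ++ [(v 0 : ℕ) + 1] := by
  rw [oneLine, List.ofFn_succ', List.concat_eq_append]
  congr 1
  · congr 1
    funext i
    rw [Equiv.Perm.mul_apply, finRotate_succ_apply, Fin.coeSucc_eq_succ]
  · rw [Equiv.Perm.mul_apply, finRotate_succ_apply, Fin.last_add_one]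

lemma oneLine_cons {M : ℕ} (v : Equiv.Perm (Fin (M+1))) :
    oneLine v = ((v 0 : ℕ) + 1) :: (List.ofFn fun i : Fin M => ((v i.succ : ℕ) + 1)) := by
  rw [oneLine, List.ofFn_succ]

lemma t_entries {M : ℕ} (v : Equiv.Perm (Fin (M+1))) (hv0 : v 0 = Fin.last M) :
    ∀ x ∈ (List.ofFn fun i : Fin M => ((v i.succ : ℕ) + 1)), x < M + 1 := by
  intro x hx
  rw [List.mem_ofFn] at hx
  obtain ⟨i, rfl⟩ := hx
  show (v i.succ : ℕ) + 1 < M + 1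
  have hne : v i.succ ≠ Fin.last M := by
    intro h
    have : i.succ = (0 : Fin (M+1)) := v.injective (h.trans hv0.symm)
    exact Fin.succ_ne_zero i this
  have := Fin.val_lt_last hne
  omega

lemma map_gmap_rot {M : ℕ} (v : Equiv.Perm (Fin (M+1))) (hv0 : v 0 = Fin.last M) :
    ((List.ofFn fun i : Fin M => ((v i.succ : ℕ) + 1)) ++ [(v 0 : ℕ) + 1]).map (gmap M)
      = (List.ofFn fun i : Fin M => ((v i.succ : ℕ) + 1)) ++ [M + 2] := by
  rw [List.map_append]
  congr 1
  · rw [List.map_congr_left (g := id)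
        (fun a ha => by unfold gmap; rw [if_neg (by have := t_entries v hv0 a ha; omega)]; rfl),
        List.map_id]
  · have h0 : (v 0 : ℕ) + 1 = M + 1 := by rw [hv0]; rfl
    rw [List.map_cons, List.map_nil, h0]
    have : gmap M (M+1) = M + 2 := by unfold gmap; rw [if_pos rfl]
    rw [this]

lemma stackSort_theta2 {M : ℕ} (v : Equiv.Perm (Fin (M+1))) (hv0 : v 0 = Fin.last M) :
    stackSort (oneLine (swapTop M * extLast (v * finRotate (M+1)))) =
      stackSort (oneLine v) ++ [M+2] := by
  rw [oneLine_theta1, oneLine_rot, map_gmap_rot v hv0]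
  have e1 : ((List.ofFn fun i : Fin M => ((v i.succ : ℕ) + 1)) ++ [M+2]) ++ [M+1]
      = (List.ofFn fun i : Fin M => ((v i.succ : ℕ) + 1)) ++ (M+2) :: [M+1] := by simp
  rw [e1,
      stackSort_middle (b := M+2) (fun x hx => by have := t_entries v hv0 x hx; omega)
        (fun x hx => by simp at hx; omega),
      stackSort_singleton]
  have e2 : oneLine v = (M+1) :: (List.ofFn fun i : Fin M => ((v i.succ : ℕ) + 1)) := by
    rw [oneLine_cons v]
    congr 1
    simp [hv0]
  rw [e2, stackSort_cons_max (t_entries v hv0)]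

lemma desc_theta2 {M : ℕ} (v : Equiv.Perm (Fin (M+1))) (hv0 : v 0 = Fin.last M)
    (hM : 1 ≤ M) :
    descents (swapTop M * extLast (v * finRotate (M+1))) = descents v := by
  rw [descents_eq_desL, descents_eq_desL, oneLine_theta1, oneLine_rot, map_gmap_rot v hv0]
  set t := (List.ofFn fun i : Fin M => ((v i.succ : ℕ) + 1)) with ht
  have htlen : t.length = M := by rw [ht, List.length_ofFn]
  have htne : t ≠ [] := by intro h; rw [h] at htlen; simp at htlen; omega
  have h1 : desL ((t ++ [M+2]) ++ [M+1]) = desL (t ++ [M+2]) + 1 := by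
    rw [desL_append_singleton (by simp)]
    have hgl : (t ++ [M+2]).getD ((t ++ [M+2]).length - 1) 0 = M + 2 := by
      have : (t ++ [M+2]).length - 1 = t.length := by simp
      rw [this, List.getD_append_right _ _ _ _ (le_refl _)]
      simp
    rw [hgl, if_pos (by omega)]
  have h2 : desL (t ++ [M+2]) = desL t := by
    rw [desL_append_singleton htne]
    have hmem : t.getD (t.length - 1) 0 ∈ t := getD_mem t (by omega)
    have := t_entries v hv0 _ hmem
    rw [if_neg (by omega), Nat.add_zero]
  have e2 : oneLine v = (M+1) :: t := by
    rw [oneLine_cons v, ht]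
    congr 1
    simp [hv0]
  rw [h1, h2, e2, desL_cons htne (t_entries v hv0)]

def G (N k : ℕ) : Polynomial ℚ :=
  ∑ w ∈ Finset.univ.filter (fun w : Equiv.Perm (Fin N) => SortsInto N k w),
    (X : Polynomial ℚ) ^ descents w

lemma G_def (N k : ℕ) : G N k =
    ∑ w ∈ Finset.univ.filter (fun w : Equiv.Perm (Fin N) => SortsInto N k w),
      (X : Polynomial ℚ) ^ descents w := rfl

lemma master (M k : ℕ) (hk : 1 ≤ k) (hkM : k ≤ M) (hM : 1 ≤ M) (N : ℕ) (hN : N = M + 2) :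
    (∑ w ∈ Finset.univ.filter (fun w : Equiv.Perm (Fin N) =>
        SortsInto N k w ∧ (w ⟨0, by omega⟩ : ℕ) + 1 ≤ M ∧ (w ⟨M + 1, by omega⟩ : ℕ) + 1 = M + 1),
      (X : Polynomial ℚ) ^ descents w) = G (M+1) k - G M k := by
  subst hN
  have hrotlast : finRotate (M+1) (Fin.last M) = 0 := by
    rw [finRotate_succ_apply, Fin.last_add_one]
  have hlast_ne_zero : (Fin.last M : Fin (M+1)) ≠ 0 := by
    intro h
    have := congrArg Fin.val h
    rw [Fin.val_last] at this
    simp at this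
    omega
  -- step A
  have hA : G M k = ∑ u ∈ (Finset.univ.filter
      (fun u : Equiv.Perm (Fin (M+1)) => SortsInto (M+1) k u)).filter
      (fun u => u (Fin.last M) = Fin.last M), (X : Polynomial ℚ) ^ descents u := by
    rw [G_def]
    apply Finset.sum_bij (fun (u : Equiv.Perm (Fin M)) _ => extLast u)
    · intro u hu
      simp only [Finset.mem_filter, Finset.mem_univ, true_and] at hu ⊢
      exact ⟨(sortsInto_succ_iff hkM (stackSort_oneLine_extLast u)).2 hu, extLast_last u⟩
    · intro a _ b _ h
      exact extLast_injective h
    · intro v hv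
      simp only [Finset.mem_filter, Finset.mem_univ, true_and] at hv
      obtain ⟨hs, hl⟩ := hv
      obtain ⟨u, rfl⟩ := extLast_surj hl
      refine ⟨u, ?_, rfl⟩
      simp only [Finset.mem_filter, Finset.mem_univ, true_and]
      exact (sortsInto_succ_iff hkM (stackSort_oneLine_extLast u)).1 hs
    · intro u hu
      rw [descents_extLast u hM]
  -- step B : split
  have hsplit := Finset.sum_filter_add_sum_filter_not
    (Finset.univ.filter (fun u : Equiv.Perm (Fin (M+1)) => SortsInto (M+1) k u))
    (fun u => u (Fin.last M) = Fin.last M)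
    (fun u => (X : Polynomial ℚ) ^ descents u)
  -- step C : main bijection
  have hss : ∀ v : Equiv.Perm (Fin (M+1)),
      stackSort (oneLine (if v 0 = Fin.last M then swapTop M * extLast (v * finRotate (M+1))
        else swapTop M * extLast v)) = stackSort (oneLine v) ++ [M+2] := by
    intro v
    by_cases h0 : v 0 = Fin.last M
    · rw [if_pos h0]; exact stackSort_theta2 v h0
    · rw [if_neg h0]; exact stackSort_theta1 v
  have hB : (∑ u ∈ (Finset.univ.filter
      (fun u : Equiv.Perm (Fin (M+1)) => SortsInto (M+1) k u)).filter
        (fun u => ¬ u (Fin.last M) = Fin.last M), (X : Polynomial ℚ) ^ descents u)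
      = ∑ w ∈ Finset.univ.filter (fun w : Equiv.Perm (Fin (M+2)) =>
          SortsInto (M+2) k w ∧ (w ⟨0, by omega⟩ : ℕ) + 1 ≤ M ∧
            (w ⟨M + 1, by omega⟩ : ℕ) + 1 = M + 1),
        (X : Polynomial ℚ) ^ descents w := by
    apply Finset.sum_bij (fun (v : Equiv.Perm (Fin (M+1))) _ =>
      if v 0 = Fin.last M then swapTop M * extLast (v * finRotate (M+1))
        else swapTop M * extLast v)
    · -- maps into
      intro v hv
      simp only [Finset.mem_filter, Finset.mem_univ, true_and] at hv ⊢
      obtain ⟨hSI, hvlast⟩ := hv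
      refine ⟨(sortsInto_succ_iff (by omega) (hss v)).2 hSI, ?_, ?_⟩
      · -- value at position 0
        have hz : (⟨0, by omega⟩ : Fin (M+2)) = (0 : Fin (M+1)).castSucc := by
          apply Fin.ext; simp
        rw [hz]
        by_cases h0 : v 0 = Fin.last M
        · rw [if_pos h0, theta_apply_castSucc]
          have hu0 : (v * finRotate (M+1)) 0 = v (0 + 1) := by
            rw [Equiv.Perm.mul_apply, finRotate_succ_apply]
          have hne : (v * finRotate (M+1)) 0 ≠ Fin.last M := by
            rw [hu0]
            intro h
            have h01 : (0 + 1 : Fin (M+1)) = 0 := v.injective (h.trans h0.symm)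
            have hv01 := congrArg Fin.val h01
            rw [zero_add, Fin.val_one'] at hv01
            simp at hv01
            omega
          rw [if_neg hne]
          have := Fin.val_lt_last hne
          simp only [Fin.coe_castSucc]
          omega
        · rw [if_neg h0, theta_apply_castSucc, if_neg h0]
          have := Fin.val_lt_last h0
          simp only [Fin.coe_castSucc]
          omega
      · -- value at last position
        have hlfin : (⟨M + 1, by omega⟩ : Fin (M+2)) = Fin.last (M+1) := by
          apply Fin.ext; simp
        rw [hlfin]
        by_cases h0 : v 0 = Fin.last M
        · rw [if_pos h0, theta_apply_last]; simp
        · rw [if_neg h0, theta_apply_last]; simp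
    · -- injective
      intro a ha b hb h
      simp only [Finset.mem_filter, Finset.mem_univ, true_and] at ha hb
      by_cases h0a : a 0 = Fin.last M <;> by_cases h0b : b 0 = Fin.last M
      · rw [if_pos h0a, if_pos h0b] at h
        exact mul_right_cancel (extLast_injective (mul_left_cancel h))
      · rw [if_pos h0a, if_neg h0b] at h
        have heq := extLast_injective (mul_left_cancel h)
        exfalso
        apply hb.2
        rw [← heq, Equiv.Perm.mul_apply, hrotlast, h0a]
      · rw [if_neg h0a, if_pos h0b] at h
        have heq := extLast_injective (mul_left_cancel h)
        exfalso
        apply ha.2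
        rw [heq, Equiv.Perm.mul_apply, hrotlast, h0b]
      · rw [if_neg h0a, if_neg h0b] at h
        exact extLast_injective (mul_left_cancel h)
    · -- surjective
      intro w hw
      simp only [Finset.mem_filter, Finset.mem_univ, true_and] at hw
      obtain ⟨hSI, hcond0, hcondlast⟩ := hw
      have hlfin : (⟨M + 1, by omega⟩ : Fin (M+2)) = Fin.last (M+1) := by
        apply Fin.ext; simp
      have hwlast : w (Fin.last (M+1)) = (Fin.last M).castSucc := by
        rw [hlfin] at hcondlast
        apply Fin.ext
        simp only [Fin.coe_castSucc, Fin.val_last]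
        omega
      have he : (swapTop M * w) (Fin.last (M+1)) = Fin.last (M+1) := by
        rw [Equiv.Perm.mul_apply, hwlast, swapTop, Equiv.swap_apply_left]
      obtain ⟨v', hv'⟩ := extLast_surj he
      have hw' : swapTop M * extLast v' = w := by
        rw [hv', ← mul_assoc, swapTop, Equiv.swap_mul_self, one_mul]
      have h0' : v' 0 ≠ Fin.last M := by
        intro h0
        have hz : (⟨0, by omega⟩ : Fin (M+2)) = (0 : Fin (M+1)).castSucc := by
          apply Fin.ext; simp
        rw [← hw', hz, theta_apply_castSucc, if_pos h0] at hcond0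
        rw [Fin.val_last] at hcond0
        omega
      by_cases hvl : v' (Fin.last M) = Fin.last M
      · -- case 2 preimage
        have hrotinv0 : (finRotate (M+1))⁻¹ 0 = Fin.last M := by
          rw [← hrotlast]; exact Equiv.symm_apply_apply _ _
        have hv0 : (v' * (finRotate (M+1))⁻¹) 0 = Fin.last M := by
          rw [Equiv.Perm.mul_apply, hrotinv0, hvl]
        have hcancel : (v' * (finRotate (M+1))⁻¹) * finRotate (M+1) = v' := by
          rw [mul_assoc, inv_mul_cancel, mul_one]
        have hTv : (if (v' * (finRotate (M+1))⁻¹) 0 = Fin.last M then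
            swapTop M * extLast ((v' * (finRotate (M+1))⁻¹) * finRotate (M+1))
            else swapTop M * extLast (v' * (finRotate (M+1))⁻¹)) = w := by
          rw [if_pos hv0, hcancel, hw']
        refine ⟨v' * (finRotate (M+1))⁻¹, ?_, hTv⟩
        simp only [Finset.mem_filter, Finset.mem_univ, true_and]
        constructor
        · apply (sortsInto_succ_iff (by omega : k ≤ M + 1) (hss _)).1
          rw [hTv]
          exact hSI
        · -- last ≠ last
          intro hcontr
          rw [Equiv.Perm.mul_apply] at hcontr
          have hy : (finRotate (M+1))⁻¹ (Fin.last M) = Fin.last M :=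
            v'.injective (hcontr.trans hvl.symm)
          have h2 : Fin.last M = (0 : Fin (M+1)) := by
            calc Fin.last M
                = finRotate (M+1) ((finRotate (M+1))⁻¹ (Fin.last M)) :=
                  (Equiv.apply_symm_apply _ _).symm
              _ = finRotate (M+1) (Fin.last M) := by rw [hy]
              _ = 0 := hrotlast
          exact hlast_ne_zero h2
      · -- case 1 preimage
        have hTv : (if v' 0 = Fin.last M then
            swapTop M * extLast (v' * finRotate (M+1))
            else swapTop M * extLast v') = w := by
          rw [if_neg h0', hw']
        refine ⟨v', ?_, hTv⟩
        simp only [Finset.mem_filter, Finset.mem_univ, true_and]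
        constructor
        · apply (sortsInto_succ_iff (by omega : k ≤ M + 1) (hss _)).1
          rw [hTv]
          exact hSI
        · exact hvl
    · -- descents preserved
      intro v hv
      simp only [Finset.mem_filter, Finset.mem_univ, true_and] at hv
      by_cases h0 : v 0 = Fin.last M
      · rw [if_pos h0, desc_theta2 v h0 hM]
      · rw [if_neg h0, desc_theta1 v hv.2]
  rw [← hB, hA, G_def (M+1) k, ← hsplit]
  ring

/-- The descent generating function of
`{w ∈ 𝔖_{n+k+1} : s(w) ∈ 𝔖_{n+1,k}, w(1) ≤ n+k-1, w(n+k+1) = n+k}`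
equals `N_{n,k}(x) - N_{n-1,k}(x)`. -/
theorem H2_identity (n k : ℕ) (hn : 1 ≤ n) (hk : 1 ≤ k) :
    ∑ w ∈ Finset.univ.filter (fun w : Equiv.Perm (Fin (n + k + 1)) =>
        SortsInto (n + k + 1) k w ∧ (w ⟨0, by omega⟩ : ℕ) + 1 ≤ n + k - 1 ∧
          (w ⟨n + k, by omega⟩ : ℕ) + 1 = n + k),
      (X : Polynomial ℚ) ^ descents w =
    Nnk n k - Nnk (n - 1) k := by
  have key := master (n + k - 1) k hk (by omega) (by omega) (n + k + 1) (by omega)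
  have hG1 : G (n + k - 1 + 1) k = Nnk n k := by
    have e1 : n + k - 1 + 1 = n + k := by omega
    have h := congrArg (fun N => G N k) e1
    exact h.trans rfl
  have hG2 : G (n + k - 1) k = Nnk (n - 1) k := by
    have e2 : n - 1 + k = n + k - 1 := by omega
    have h := congrArg (fun N => G N k) e2
    exact h.symm.trans rfl
  rw [hG1, hG2] at key
  rw [← key]
  apply Finset.sum_congr
  · apply Finset.filter_congr
    intro w _
    have hfe : (⟨n + k - 1 + 1, by omega⟩ : Fin (n + k + 1)) = ⟨n + k, by omega⟩ :=
      Fin.ext (show n + k - 1 + 1 = n + k by omega)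
    constructor
    · rintro ⟨h1, h2, h3⟩
      refine ⟨h1, h2, ?_⟩
      rw [hfe, show n + k - 1 + 1 = n + k from by omega]
      exact h3
    · rintro ⟨h1, h2, h3⟩
      refine ⟨h1, h2, ?_⟩
      rw [hfe, show n + k - 1 + 1 = n + k from by omega] at h3
      exact h3
  · intro _ _
    rfl
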